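/- Define T_B(τ) = (27−8τ²)/(18−9τ²) − √((8τ²−9/2)² − 45/4)/(18−9τ²) and T̂_B(τ) = ((3−τ)/2)·T_B(τ). Then for √(9+3√5)/4 ≤ τ ≤ 1, T̂_B is monotonically decreasing, with T̂_B(1) = 2 and T̂_B(√(9+3√5)/4) = (30+2√5)/11 − (15+√5)√(9+3√5)/66. -/

import Mathlib

noncomputable def TB (τ : ℝ) : ℝ :=
  (27 - 8 * τ ^ 2) / (18 - 9 * τ ^ 2) -
    Real.sqrt ((8 * τ ^ 2 - 9 / 2) ^ 2 - 45 / 4) / (18 - 9 * τ ^ 2)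

noncomputable def hatTB (τ : ℝ) : ℝ := ((3 - τ) / 2) * TB τ

noncomputable def FB (x : ℝ) : ℝ :=
  20 * (3 - x) / (27 - 8 * x ^ 2 + Real.sqrt ((8 * x ^ 2 - 9 / 2) ^ 2 - 45 / 4))

lemma sqrt5_bounds : 11/5 ≤ Real.sqrt 5 ∧ Real.sqrt 5 ≤ 9/4 := by
  have h := Real.sq_sqrt (by norm_num : (5:ℝ) ≥ 0).le
  have h0 := Real.sqrt_nonneg 5
  constructor <;> nlinarith

lemma tau0_sq : (Real.sqrt (9 + 3 * Real.sqrt 5) / 4) ^ 2 = (9 + 3 * Real.sqrt 5) / 16 := by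
  have h5 : (0:ℝ) ≤ Real.sqrt 5 := Real.sqrt_nonneg 5
  rw [div_pow, Real.sq_sqrt (by linarith)]
  norm_num

lemma tau0_bounds : (9:ℝ)/10 ≤ Real.sqrt (9 + 3 * Real.sqrt 5) / 4 ∧
    Real.sqrt (9 + 3 * Real.sqrt 5) / 4 < 1 := by
  obtain ⟨h1, h2⟩ := sqrt5_bounds
  have h9 : (0:ℝ) ≤ 9 + 3 * Real.sqrt 5 := by linarith
  have hr := Real.sq_sqrt h9
  have hr0 := Real.sqrt_nonneg (9 + 3 * Real.sqrt 5)
  constructor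
  · nlinarith
  · nlinarith

lemma u_nonneg {x : ℝ} (hx : Real.sqrt (9 + 3 * Real.sqrt 5) / 4 ≤ x) :
    0 ≤ (8 * x ^ 2 - 9 / 2) ^ 2 - 45 / 4 := by
  obtain ⟨h1, h2⟩ := sqrt5_bounds
  have h5 := Real.sq_sqrt (by norm_num : (0:ℝ) ≤ 5)
  have ht := tau0_sq
  have ht9 := tau0_bounds.1
  have hx2 : (9 + 3 * Real.sqrt 5) / 16 ≤ x ^ 2 := by
    rw [← ht]; exact pow_le_pow_left₀ (by linarith) hx 2
  nlinarith

lemma u_pos {x : ℝ} (hx : Real.sqrt (9 + 3 * Real.sqrt 5) / 4 < x) :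
    0 < (8 * x ^ 2 - 9 / 2) ^ 2 - 45 / 4 := by
  obtain ⟨h1, h2⟩ := sqrt5_bounds
  have h5 := Real.sq_sqrt (by norm_num : (0:ℝ) ≤ 5)
  have ht := tau0_sq
  have ht9 := tau0_bounds.1
  have hx2 : (9 + 3 * Real.sqrt 5) / 16 < x ^ 2 := by
    rw [← ht]
    exact pow_lt_pow_left₀ hx (by linarith) (by norm_num)
  nlinarith

lemma keyEq {x : ℝ} (hx1 : Real.sqrt (9 + 3 * Real.sqrt 5) / 4 ≤ x) (hx2 : x ≤ 1) :
    hatTB x = FB x := by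
  have ht9 := tau0_bounds.1
  have hx0 : (9:ℝ)/10 ≤ x := le_trans ht9 hx1
  have hu := u_nonneg hx1
  set s := Real.sqrt ((8 * x ^ 2 - 9 / 2) ^ 2 - 45 / 4) with hs
  have hs2 : s ^ 2 = (8 * x ^ 2 - 9 / 2) ^ 2 - 45 / 4 := Real.sq_sqrt hu
  have hs0 : 0 ≤ s := Real.sqrt_nonneg _
  have hg : (0:ℝ) < 18 - 9 * x ^ 2 := by nlinarith
  have hd : (0:ℝ) < 27 - 8 * x ^ 2 + s := by nlinarith
  unfold hatTB TB FB
  rw [← hs]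
  field_simp
  rw [div_eq_div_iff (by nlinarith) (by nlinarith)]
  nlinarith [hs2, sq_nonneg s, sq_nonneg x]

lemma FB_deriv {x : ℝ} (hx : x ∈ Set.Ioo (Real.sqrt (9 + 3 * Real.sqrt 5) / 4) 1) :
    ∃ d, HasDerivAt FB d x ∧ d ≤ 0 := by
  obtain ⟨hxl, hxr⟩ := hx
  have ht9 := tau0_bounds.1
  have hx0 : (9:ℝ)/10 ≤ x := le_trans ht9 hxl.le
  have hu : 0 < (8 * x ^ 2 - 9 / 2) ^ 2 - 45 / 4 := u_pos hxl
  set s := Real.sqrt ((8 * x ^ 2 - 9 / 2) ^ 2 - 45 / 4) with hs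
  have hs2 : s ^ 2 = (8 * x ^ 2 - 9 / 2) ^ 2 - 45 / 4 := Real.sq_sqrt hu.le
  have hspos : 0 < s := Real.sqrt_pos.2 hu
  have hsle : s ≤ 1 := by
    rw [hs, show (1:ℝ) = Real.sqrt 1 from Real.sqrt_one.symm]
    apply Real.sqrt_le_sqrt
    nlinarith [mul_pos (by linarith : (0:ℝ) < 1 - x) (by linarith : (0:ℝ) < 1 + x),
      sq_nonneg (x - 9/10), sq_nonneg x]
  have hd0 : (0:ℝ) < 27 - 8 * x ^ 2 + s := by nlinarith
  -- derivative of the inner polynomial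
  have hpoly : HasDerivAt (fun y : ℝ => (8 * y ^ 2 - 9 / 2) ^ 2 - 45 / 4)
      (2 * (8 * x ^ 2 - 9 / 2) * (16 * x)) x := by
    have h1 : HasDerivAt (fun y : ℝ => 8 * y ^ 2 - 9 / 2) (16 * x) x := by
      have := ((hasDerivAt_pow 2 x).const_mul (8:ℝ)).sub_const (9/2)
      refine this.congr_deriv ?_
      norm_num
      ring
    have := (h1.pow 2).sub_const (45/4)
    refine this.congr_deriv ?_
    norm_num
  have hsqrt : HasDerivAt (fun y : ℝ => Real.sqrt ((8 * y ^ 2 - 9 / 2) ^ 2 - 45 / 4))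
      (2 * (8 * x ^ 2 - 9 / 2) * (16 * x) / (2 * s)) x := hpoly.sqrt (ne_of_gt hu)
  have hden : HasDerivAt (fun y : ℝ => 27 - 8 * y ^ 2 + Real.sqrt ((8 * y ^ 2 - 9 / 2) ^ 2 - 45 / 4))
      (-(16 * x) + 2 * (8 * x ^ 2 - 9 / 2) * (16 * x) / (2 * s)) x := by
    have h2 : HasDerivAt (fun y : ℝ => 27 - 8 * y ^ 2) (-(16 * x)) x := by
      have := ((hasDerivAt_pow 2 x).const_mul (8:ℝ)).const_sub 27
      refine this.congr_deriv ?_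
      norm_num
      ring
    exact h2.add hsqrt
  have hnum : HasDerivAt (fun y : ℝ => 20 * (3 - y)) (-20 : ℝ) x := by
    have := ((hasDerivAt_id x).const_sub 3).const_mul (20:ℝ)
    refine this.congr_deriv ?_
    ring
  have hF : HasDerivAt FB
      ((-20 * (27 - 8 * x ^ 2 + s) -
        20 * (3 - x) * (-(16 * x) + 2 * (8 * x ^ 2 - 9 / 2) * (16 * x) / (2 * s))) /
        (27 - 8 * x ^ 2 + s) ^ 2) x := by
    have := hnum.div hden (ne_of_gt hd0)
    exact this
  refine ⟨_, hF, ?_⟩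
  apply div_nonpos_of_nonpos_of_nonneg _ (sq_nonneg _)
  have key : 0 ≤ s * (27 - 8 * x ^ 2 + s) + (3 - x) * (16 * x * (8 * x ^ 2 - 9 / 2) - 16 * x * s) := by
    have hc : 0 ≤ 48 * x - 8 * x ^ 2 - 27 := by nlinarith
    nlinarith [mul_nonneg (by linarith : (0:ℝ) ≤ 1 - s) hc, sq_nonneg s,
      mul_nonneg (by linarith : (0:ℝ) ≤ x - 9/10) (by linarith : (0:ℝ) ≤ 1 - x)]
  have heq : -20 * (27 - 8 * x ^ 2 + s) -
        20 * (3 - x) * (-(16 * x) + 2 * (8 * x ^ 2 - 9 / 2) * (16 * x) / (2 * s))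
      = (-20 / s) * (s * (27 - 8 * x ^ 2 + s) + (3 - x) * (16 * x * (8 * x ^ 2 - 9 / 2) - 16 * x * s)) := by
    field_simp
    ring
  rw [heq]
  exact mul_nonpos_of_nonpos_of_nonneg (div_nonpos_of_nonpos_of_nonneg (by norm_num) hspos.le) key

lemma FB_anti : AntitoneOn FB (Set.Icc (Real.sqrt (9 + 3 * Real.sqrt 5) / 4) 1) := by
  have ht9 := tau0_bounds.1
  have htlt := tau0_bounds.2
  have hint : interior (Set.Icc (Real.sqrt (9 + 3 * Real.sqrt 5) / 4) 1)
      = Set.Ioo (Real.sqrt (9 + 3 * Real.sqrt 5) / 4) 1 := interior_Icc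
  apply antitoneOn_of_deriv_nonpos (convex_Icc _ _)
  · apply ContinuousOn.div
    · fun_prop
    · fun_prop
    · intro x hx
      obtain ⟨hx1, hx2⟩ := hx
      have hx0 : (9:ℝ)/10 ≤ x := le_trans ht9 hx1
      have hs0 : 0 ≤ Real.sqrt ((8 * x ^ 2 - 9 / 2) ^ 2 - 45 / 4) := Real.sqrt_nonneg _
      nlinarith
  · rw [hint]
    intro x hx
    obtain ⟨d, hd, _⟩ := FB_deriv hx
    exact hd.differentiableAt.differentiableWithinAt
  · rw [hint]
    intro x hx
    obtain ⟨d, hd, hle⟩ := FB_deriv hx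
    rw [hd.deriv]
    exact hle

/-- On `[√(9+3√5)/4, 1]`, `T̂_B` is monotonically decreasing, `T̂_B(1) = 2` and
`T̂_B(√(9+3√5)/4) = (30+2√5)/11 − (15+√5)√(9+3√5)/66`. -/
theorem stmt_16 :
    AntitoneOn hatTB (Set.Icc (Real.sqrt (9 + 3 * Real.sqrt 5) / 4) 1) ∧
    hatTB 1 = 2 ∧
    hatTB (Real.sqrt (9 + 3 * Real.sqrt 5) / 4) =
      (30 + 2 * Real.sqrt 5) / 11 -
        (15 + Real.sqrt 5) * Real.sqrt (9 + 3 * Real.sqrt 5) / 66 := by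
  refine ⟨?_, ?_, ?_⟩
  · intro a ha b hb hab
    rw [keyEq ha.1 ha.2, keyEq hb.1 hb.2]
    exact FB_anti ha hb hab
  · unfold hatTB TB
    rw [show ((8 * (1:ℝ) ^ 2 - 9 / 2) ^ 2 - 45 / 4) = 1 by norm_num, Real.sqrt_one]
    norm_num
  · obtain ⟨h1, h2⟩ := sqrt5_bounds
    set q := Real.sqrt 5 with hq
    set r := Real.sqrt (9 + 3 * q) with hr
    have hq2 : q ^ 2 = 5 := Real.sq_sqrt (by norm_num)
    have hr2 : r ^ 2 = 9 + 3 * q := Real.sq_sqrt (by linarith)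
    have hr0 : 0 ≤ r := Real.sqrt_nonneg _
    unfold hatTB TB
    have hu0 : (8 * (r / 4) ^ 2 - 9 / 2) ^ 2 - 45 / 4 = 0 := by
      linear_combination ((r ^ 2 - 9 + 3 * q) / 4) * hr2 + (9 / 4) * hq2
    rw [hu0, Real.sqrt_zero]
    have e1 : (r / 4) ^ 2 = (9 + 3 * q) / 16 := by
      rw [div_pow, hr2]; norm_num
    rw [e1]
    have hden : (0:ℝ) < 18 - 9 * ((9 + 3 * q) / 16) := by nlinarith
    have hTB0 : (27 - 8 * ((9 + 3 * q) / 16)) / (18 - 9 * ((9 + 3 * q) / 16))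
        = 4 * (15 + q) / 33 := by
      rw [div_eq_div_iff (ne_of_gt hden) (by norm_num)]
      linear_combination (27 / 4) * hq2
    rw [zero_div, sub_zero, hTB0]
    ring
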